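/- Let μ be a probability measure on ℝ^d, supported in a fundamental domain of ℤ^d, such that for some C > 0 and α > 0 one has |μ̂(ξ)| ≤ C|ξ|^{-α} for all ξ ≠ 0. Let T(x) = Ax mod 1 be an expanding toral endomorphism (A a d×d integer matrix with smallest singular value σ > 1), fix k ∈ ℤ^d ∖ {0}, and set S_N(x) = (1/N) Σ_{n=1}^N exp(2πi k·T^n(x)). Then Σ_{N=1}^∞ (1/N) ∫ |S_N(x)|² dμ(x) < ∞. -/

import Mathlib

noncomputable section

open MeasureTheory Real Filter Set
open scoped Topology

/-- Euclidean norm on `ℝ^d` (realised as `Fin d → ℝ`). -/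
def eNorm {d : ℕ} (x : Fin d → ℝ) : ℝ := Real.sqrt (∑ i, x i ^ 2)

/-- Fourier transform of a measure on `ℝ^d`: `μ̂(ξ) = ∫ e^{−2πi ξ·x} dμ(x)`. -/
def ftRd {d : ℕ} (μ : Measure (Fin d → ℝ)) (ξ : Fin d → ℝ) : ℂ :=
  ∫ x, Complex.exp (-(2 * (π : ℂ) * Complex.I) * ((∑ i, ξ i * x i : ℝ) : ℂ)) ∂μ

/-- The toral endomorphism `x ↦ Ax mod 1` on `𝕋^d` induced by an integer matrix `A`. -/
def toralEndo {d : ℕ} (A : Matrix (Fin d) (Fin d) ℤ)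
    (x : Fin d → UnitAddCircle) : Fin d → UnitAddCircle :=
  fun i => ∑ j, A i j • x j

/-- A toral endomorphism is expanding if all singular values of `A` are `> 1`,
equivalently there is `σ > 1` with `|Av| ≥ σ|v|` for all `v ∈ ℝ^d`. -/
def IsExpanding {d : ℕ} (A : Matrix (Fin d) (Fin d) ℤ) : Prop :=
  ∃ σ : ℝ, 1 < σ ∧ ∀ v : Fin d → ℝ,
    σ * eNorm v ≤ eNorm ((A.map (Int.cast : ℤ → ℝ)).mulVec v)

/-- The Weyl sum `S_N(x) = (1/N) Σ_{n=1}^N exp(2πi k·T^n(x))` for the toral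
endomorphism induced by `A`, evaluated at the projection of `x ∈ ℝ^d` to `𝕋^d`. -/
def weylSum {d : ℕ} (A : Matrix (Fin d) (Fin d) ℤ) (k : Fin d → ℤ) (N : ℕ)
    (x : Fin d → ℝ) : ℂ :=
  (∑ n ∈ Finset.Icc 1 N, ∏ i,
    (fourier (k i) ((toralEndo A)^[n] (fun j => ((x j : ℝ) : UnitAddCircle)) i) : ℂ)) / (N : ℂ)

/-! ### Auxiliary lemmas -/

section Aux

open Matrix

lemma eNorm_eq {d : ℕ} (x : Fin d → ℝ) :
    eNorm x = ‖(WithLp.equiv 2 (Fin d → ℝ)).symm x‖ := by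
  simp [eNorm, EuclideanSpace.norm_eq, sq_abs]

lemma eNorm_nonneg' {d : ℕ} (x : Fin d → ℝ) : 0 ≤ eNorm x := Real.sqrt_nonneg _

lemma eNorm_neg' {d : ℕ} (x : Fin d → ℝ) : eNorm (-x) = eNorm x := by
  simp [eNorm, neg_sq]

lemma eNorm_sub_le' {d : ℕ} (x y : Fin d → ℝ) : eNorm x - eNorm y ≤ eNorm (x - y) := by
  rw [eNorm_eq, eNorm_eq, eNorm_eq]
  exact norm_sub_norm_le ((WithLp.equiv 2 (Fin d → ℝ)).symm x)
    ((WithLp.equiv 2 (Fin d → ℝ)).symm y)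

lemma eNorm_eq_zero' {d : ℕ} {x : Fin d → ℝ} (h : eNorm x = 0) : x = 0 := by
  rw [eNorm_eq] at h
  have h2 : (WithLp.equiv 2 (Fin d → ℝ)).symm x = 0 := norm_eq_zero.1 h
  have := congrArg (WithLp.equiv 2 (Fin d → ℝ)) h2
  simpa using this

lemma sq_eNorm' {d : ℕ} (x : Fin d → ℝ) : eNorm x ^ 2 = dotProduct x x := by
  rw [eNorm, Real.sq_sqrt (by positivity)]
  simp [dotProduct, sq]

lemma dot_le_eNorm' {d : ℕ} (x y : Fin d → ℝ) :
    dotProduct x y ≤ eNorm x * eNorm y := by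
  rw [eNorm_eq, eNorm_eq]
  have := real_inner_le_norm ((WithLp.equiv 2 (Fin d → ℝ)).symm x)
    ((WithLp.equiv 2 (Fin d → ℝ)).symm y)
  simpa [PiLp.inner_apply, dotProduct, mul_comm] using this

/-- If `M` expands by factor `σ`, then so does its transpose. -/
lemma transpose_expand {d : ℕ} {M : Matrix (Fin d) (Fin d) ℝ} {σ : ℝ} (hσ : 1 < σ)
    (hM : ∀ v, σ * eNorm v ≤ eNorm (M.mulVec v)) (v : Fin d → ℝ) :
    σ * eNorm v ≤ eNorm (Mᵀ.mulVec v) := by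
  have hσ0 : 0 < σ := lt_trans one_pos hσ
  have hinj : Function.Injective (Matrix.toLin' M) := by
    rw [injective_iff_map_eq_zero]
    intro a ha
    have h1 : σ * eNorm a ≤ eNorm (M.mulVec a) := hM a
    have h2 : M.mulVec a = 0 := by simpa [Matrix.toLin'_apply] using ha
    rw [h2] at h1
    have h0 : eNorm (0 : Fin d → ℝ) = 0 := by simp [eNorm]
    rw [h0] at h1
    have : eNorm a = 0 := le_antisymm (by nlinarith [eNorm_nonneg' a]) (eNorm_nonneg' a)
    exact eNorm_eq_zero' this
  have hsurj : Function.Surjective (Matrix.toLin' M) :=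
    (LinearMap.injective_iff_surjective).1 hinj
  obtain ⟨x, hx⟩ := hsurj v
  have hx' : M.mulVec x = v := by simpa [Matrix.toLin'_apply] using hx
  rcases eq_or_ne v 0 with rfl | hv
  · simp [eNorm, Matrix.mulVec_zero]
  · have hvpos : 0 < eNorm v := by
      rcases lt_or_eq_of_le (eNorm_nonneg' v) with h | h
      · exact h
      · exact absurd (eNorm_eq_zero' h.symm) hv
    have key : eNorm v ^ 2 ≤ σ⁻¹ * eNorm v * eNorm (Mᵀ.mulVec v) := by
      have e1 : eNorm v ^ 2 = dotProduct x (Mᵀ.mulVec v) := by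
        rw [sq_eNorm', Matrix.mulVec_transpose, dotProduct_comm x,
          ← Matrix.dotProduct_mulVec, hx']
      have e2 : dotProduct x (Mᵀ.mulVec v) ≤ eNorm x * eNorm (Mᵀ.mulVec v) :=
        dot_le_eNorm' _ _
      have e3 : eNorm x ≤ σ⁻¹ * eNorm v := by
        have h := hM x
        rw [hx'] at h
        calc eNorm x = σ⁻¹ * (σ * eNorm x) := by field_simp
          _ ≤ σ⁻¹ * eNorm v := mul_le_mul_of_nonneg_left h (by positivity)
      calc eNorm v ^ 2 ≤ eNorm x * eNorm (Mᵀ.mulVec v) := e1 ▸ e2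
        _ ≤ σ⁻¹ * eNorm v * eNorm (Mᵀ.mulVec v) := by
            apply mul_le_mul_of_nonneg_right e3 (eNorm_nonneg' _)
    have k2 : σ * eNorm v ^ 2 ≤ eNorm v * eNorm (Mᵀ.mulVec v) := by
      have h := mul_le_mul_of_nonneg_left key hσ0.le
      calc σ * eNorm v ^ 2 ≤ σ * (σ⁻¹ * eNorm v * eNorm (Mᵀ.mulVec v)) := h
        _ = eNorm v * eNorm (Mᵀ.mulVec v) := by field_simp
    nlinarith [k2, hvpos]

lemma addCircle_coe_sum {d : ℕ} (f : Fin d → ℝ) :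
    ((∑ j, f j : ℝ) : AddCircle (1:ℝ)) = ∑ j, ((f j) : AddCircle (1:ℝ)) :=
  map_sum (QuotientAddGroup.mk' (AddSubgroup.zmultiples (1:ℝ))) f Finset.univ

lemma toralEndo_iterate {d : ℕ} (A : Matrix (Fin d) (Fin d) ℤ) (n : ℕ) (x : Fin d → ℝ) :
    (toralEndo A)^[n] (fun j => ((x j : ℝ) : UnitAddCircle))
      = fun i => ((((A.map (Int.cast : ℤ → ℝ)) ^ n).mulVec x i : ℝ) : UnitAddCircle) := by
  induction n with
  | zero => simp [Matrix.one_mulVec]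
  | succ n ih =>
    rw [Function.iterate_succ_apply', ih]
    funext i
    show ∑ j, A i j • (((((A.map (Int.cast : ℤ → ℝ)) ^ n).mulVec x) j : ℝ) : UnitAddCircle) = _
    have : ∀ j, A i j • (((((A.map (Int.cast : ℤ → ℝ)) ^ n).mulVec x) j : ℝ) : UnitAddCircle)
        = (((A i j : ℝ) * (((A.map (Int.cast : ℤ → ℝ)) ^ n).mulVec x) j : ℝ) : UnitAddCircle) := by
      intro j
      rw [← AddCircle.coe_zsmul]
      norm_num [zsmul_eq_mul]
    rw [Finset.sum_congr rfl (fun j _ => this j), ← addCircle_coe_sum]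
    congr 1
    rw [pow_succ']
    rw [← Matrix.mulVec_mulVec]
    simp [Matrix.mulVec, dotProduct, Matrix.map_apply]

/-- The character `x ↦ e^{2πi v·x}` on `ℝ^d`. -/
def eChar {d : ℕ} (v x : Fin d → ℝ) : ℂ :=
  Complex.exp ((2 * (π : ℂ) * Complex.I) * ((dotProduct v x : ℝ) : ℂ))

lemma fourier_prod {d : ℕ} (k : Fin d → ℤ) (y : Fin d → ℝ) :
    (∏ i, (fourier (k i) ((y i : ℝ) : UnitAddCircle) : ℂ))
      = eChar (fun i => (k i : ℝ)) y := by
  rw [eChar]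
  have : ∀ i, (fourier (k i) ((y i : ℝ) : UnitAddCircle) : ℂ)
      = Complex.exp ((2 * (π : ℂ) * Complex.I) * (((k i : ℝ) * y i : ℝ) : ℂ)) := by
    intro i
    rw [fourier_coe_apply]
    push_cast
    ring_nf
  rw [Finset.prod_congr rfl (fun i _ => this i), ← Complex.exp_sum]
  congr 1
  rw [← Finset.mul_sum]
  congr 1
  rw [dotProduct]
  push_cast
  ring

lemma eChar_norm {d : ℕ} (v x : Fin d → ℝ) : ‖eChar v x‖ = 1 := by
  rw [eChar, Complex.norm_exp]
  simp

lemma eChar_mul_conj {d : ℕ} (v w x : Fin d → ℝ) :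
    eChar v x * (starRingEnd ℂ) (eChar w x) = eChar (v - w) x := by
  rw [eChar, eChar, eChar, ← Complex.exp_conj, ← Complex.exp_add]
  congr 1
  rw [sub_dotProduct]
  push_cast
  simp [Complex.conj_I, map_ofNat]
  ring

lemma eChar_cont {d : ℕ} (v : Fin d → ℝ) : Continuous (eChar v) := by
  unfold eChar dotProduct
  fun_prop

lemma eChar_integrable {d : ℕ} (μ : Measure (Fin d → ℝ)) [IsProbabilityMeasure μ]
    (v : Fin d → ℝ) : Integrable (eChar v) μ := by
  refine ⟨(eChar_cont v).aestronglyMeasurable, ?_⟩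
  apply HasFiniteIntegral.of_bounded (C := 1)
  filter_upwards with x
  rw [eChar_norm]

lemma integral_eChar {d : ℕ} (μ : Measure (Fin d → ℝ)) (v : Fin d → ℝ) :
    ∫ x, eChar v x ∂μ = ftRd μ (-v) := by
  rw [ftRd]
  congr 1
  funext x
  rw [eChar]
  congr 1
  have : (∑ i, (-v) i * x i : ℝ) = -(dotProduct v x) := by
    simp [dotProduct]
  rw [this]
  push_cast
  ring

lemma norm_integral_eChar_le_one {d : ℕ} (μ : Measure (Fin d → ℝ)) [IsProbabilityMeasure μ]
    (v : Fin d → ℝ) : ‖∫ x, eChar v x ∂μ‖ ≤ 1 := by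
  have := norm_integral_le_of_norm_le_const (μ := μ) (f := eChar v) (C := 1)
    (by filter_upwards with x; rw [eChar_norm])
  simpa using this

lemma weylSum_eq {d : ℕ} (A : Matrix (Fin d) (Fin d) ℤ) (k : Fin d → ℤ) (N : ℕ)
    (x : Fin d → ℝ) :
    weylSum A k N x = (∑ n ∈ Finset.Icc 1 N,
      eChar (((A.map (Int.cast : ℤ → ℝ))ᵀ ^ n).mulVec (fun i => (k i : ℝ))) x) / (N : ℂ) := by
  rw [weylSum]
  congr 1
  apply Finset.sum_congr rfl
  intro n _
  rw [toralEndo_iterate, fourier_prod]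
  rw [eChar, eChar]
  congr 2
  rw [Matrix.dotProduct_mulVec, ← Matrix.mulVec_transpose, Matrix.transpose_pow]

lemma integral_sq_bound {d : ℕ} (μ : Measure (Fin d → ℝ)) [IsProbabilityMeasure μ]
    (w : ℕ → Fin d → ℝ) (N : ℕ) (hN : 1 ≤ N) (S : (Fin d → ℝ) → ℂ)
    (hS : ∀ x, S x = (∑ n ∈ Finset.Icc 1 N, eChar (w n) x) / (N : ℂ))
    (ψ : ℕ → ℕ → ℝ) (hψ : ∀ n m, ‖∫ x, eChar (w n - w m) x ∂μ‖ ≤ ψ n m) :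
    ∫ x, ‖S x‖ ^ 2 ∂μ ≤ (∑ n ∈ Finset.Icc 1 N, ∑ m ∈ Finset.Icc 1 N, ψ n m) / (N : ℝ) ^ 2 := by
  set I := Finset.Icc 1 N
  set g : (Fin d → ℝ) → ℂ := fun x => ∑ n ∈ I, eChar (w n) x with hgdef
  have hNpos : (0 : ℝ) < N := by exact_mod_cast hN
  have hpt : ∀ x, ((‖S x‖ ^ 2 : ℝ) : ℂ)
      = (∑ n ∈ I, ∑ m ∈ I, eChar (w n - w m) x) / ((N : ℂ) ^ 2) := by
    intro x
    have h1 : ‖S x‖ ^ 2 = ‖g x‖ ^ 2 / (N : ℝ) ^ 2 := by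
      rw [hS x, norm_div, div_pow, Complex.norm_natCast]
    have h2 : ((‖g x‖ ^ 2 : ℝ) : ℂ) = g x * (starRingEnd ℂ) (g x) := by
      rw [Complex.mul_conj, Complex.normSq_eq_norm_sq]
    have h3 : g x * (starRingEnd ℂ) (g x) = ∑ n ∈ I, ∑ m ∈ I, eChar (w n - w m) x := by
      rw [hgdef]
      simp only [map_sum]
      rw [Finset.sum_mul_sum]
      exact Finset.sum_congr rfl fun n _ => Finset.sum_congr rfl fun m _ =>
        eChar_mul_conj (w n) (w m) x
    rw [h1, ← h3, ← h2]
    push_cast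
    ring
  have hint : ((∫ x, ‖S x‖ ^ 2 ∂μ : ℝ) : ℂ)
      = (∑ n ∈ I, ∑ m ∈ I, ∫ x, eChar (w n - w m) x ∂μ) / ((N : ℂ) ^ 2) := by
    rw [show ((∫ x, ‖S x‖ ^ 2 ∂μ : ℝ) : ℂ) = ∫ x, ((‖S x‖ ^ 2 : ℝ) : ℂ) ∂μ from
      (integral_ofReal (𝕜 := ℂ)).symm]
    calc ∫ x, ((‖S x‖ ^ 2 : ℝ) : ℂ) ∂μ
        = ∫ x, (∑ n ∈ I, ∑ m ∈ I, eChar (w n - w m) x) / ((N : ℂ) ^ 2) ∂μ := by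
          exact integral_congr_ae (Filter.Eventually.of_forall hpt)
      _ = (∫ x, (∑ n ∈ I, ∑ m ∈ I, eChar (w n - w m) x) ∂μ) / ((N : ℂ) ^ 2) := by
          rw [integral_div]
      _ = (∑ n ∈ I, ∑ m ∈ I, ∫ x, eChar (w n - w m) x ∂μ) / ((N : ℂ) ^ 2) := by
          congr 1
          rw [integral_finset_sum I (fun n _ =>
            integrable_finset_sum I (fun m _ => eChar_integrable μ _))]
          exact Finset.sum_congr rfl fun n _ =>
            integral_finset_sum I (fun m _ => eChar_integrable μ _)
  have hnn : 0 ≤ ∫ x, ‖S x‖ ^ 2 ∂μ := integral_nonneg fun x => by positivity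
  have habs : ∫ x, ‖S x‖ ^ 2 ∂μ = ‖(((∫ x, ‖S x‖ ^ 2 ∂μ : ℝ) : ℂ) : ℂ)‖ := by
    rw [Complex.norm_real, Real.norm_eq_abs, abs_of_nonneg hnn]
  rw [habs, hint]
  rw [norm_div]
  have hden : ‖((N : ℂ) ^ 2)‖ = (N : ℝ) ^ 2 := by
    rw [norm_pow, Complex.norm_natCast]
  rw [hden]
  apply div_le_div_of_nonneg_right ?_ (by positivity)
  · calc ‖∑ n ∈ I, ∑ m ∈ I, ∫ x, eChar (w n - w m) x ∂μ‖
        ≤ ∑ n ∈ I, ‖∑ m ∈ I, ∫ x, eChar (w n - w m) x ∂μ‖ := norm_sum_le _ _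
      _ ≤ ∑ n ∈ I, ∑ m ∈ I, ‖∫ x, eChar (w n - w m) x ∂μ‖ :=
          Finset.sum_le_sum fun n _ => norm_sum_le _ _
      _ ≤ ∑ n ∈ I, ∑ m ∈ I, ψ n m :=
          Finset.sum_le_sum fun n _ => Finset.sum_le_sum fun m _ => hψ n m

end Aux

/-- If a probability measure `μ` on `ℝ^d`, supported in a fundamental domain of `ℤ^d`,
has Fourier decay `|μ̂(ξ)| ≤ C|ξ|^{-α}` for all `ξ ≠ 0`, `T` is an expanding toral
endomorphism and `k ∈ ℤ^d ∖ {0}`, then `Σ_{N=1}^∞ (1/N) ∫ |S_N(x)|² dμ(x) < ∞`. -/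
theorem stmt19 {d : ℕ} (μ : Measure (Fin d → ℝ)) [IsProbabilityMeasure μ]
    (hsupp : μ ({x : Fin d → ℝ | ∀ i, x i ∈ Ico (0 : ℝ) 1}ᶜ) = 0)
    (C α : ℝ) (hC : 0 < C) (hα : 0 < α)
    (hdecay : ∀ ξ : Fin d → ℝ, ξ ≠ 0 → ‖ftRd μ ξ‖ ≤ C * eNorm ξ ^ (-α))
    (A : Matrix (Fin d) (Fin d) ℤ) (hA : IsExpanding A)
    (k : Fin d → ℤ) (hk : k ≠ 0) :
    Summable fun N : ℕ =>
      (1 / (N + 1 : ℝ)) * ∫ x, ‖weylSum A k (N + 1) x‖ ^ 2 ∂μ := by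
  classical
  obtain ⟨σ, hσ, hM⟩ := hA
  have hσ0 : 0 < σ := lt_trans one_pos hσ
  set M : Matrix (Fin d) (Fin d) ℝ := A.map (Int.cast : ℤ → ℝ) with hMdef
  set B : Matrix (Fin d) (Fin d) ℝ := M.transpose with hBdef
  have hB : ∀ v, σ * eNorm v ≤ eNorm (B.mulVec v) := transpose_expand hσ hM
  -- iterated expansion
  have hBn : ∀ (n : ℕ) (v : Fin d → ℝ), σ ^ n * eNorm v ≤ eNorm ((B ^ n).mulVec v) := by
    intro n
    induction n with
    | zero => intro v; simp [Matrix.one_mulVec]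
    | succ n ih =>
      intro v
      have h2 := mul_le_mul_of_nonneg_left (ih v) hσ0.le
      have h3 := hB ((B ^ n).mulVec v)
      rw [Matrix.mulVec_mulVec, ← pow_succ'] at h3
      calc σ ^ (n+1) * eNorm v = σ * (σ ^ n * eNorm v) := by ring
        _ ≤ σ * eNorm ((B ^ n).mulVec v) := h2
        _ ≤ eNorm ((B ^ (n+1)).mulVec v) := h3
  set kR : Fin d → ℝ := fun i => (k i : ℝ) with hkRdef
  have hkR : 0 < eNorm kR := by
    rcases lt_or_eq_of_le (eNorm_nonneg' kR) with h | h
    · exact h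
    · exfalso
      apply hk
      have h0 : kR = 0 := eNorm_eq_zero' h.symm
      funext i
      have h2 : ((k i : ℝ)) = 0 := congrFun h0 i
      exact_mod_cast h2
  set c₀ : ℝ := (σ - 1) / σ * eNorm kR with hc₀def
  have hc₀ : 0 < c₀ := mul_pos (div_pos (by linarith) hσ0) hkR
  set w : ℕ → Fin d → ℝ := fun n => (B ^ n).mulVec kR with hwdef
  -- separation
  have hsep : ∀ n m : ℕ, n < m → c₀ * σ ^ m ≤ eNorm (w n - w m) := by
    intro n m hnm
    have hwnm : w n - w m = (B ^ n).mulVec (kR - (B ^ (m - n)).mulVec kR) := by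
      rw [Matrix.mulVec_sub]
      congr 1
      have hmn : n + (m - n) = m := by omega
      rw [Matrix.mulVec_mulVec, ← pow_add, hmn]
    rw [hwnm]
    have h1 := hBn n (kR - (B ^ (m - n)).mulVec kR)
    have h2 : eNorm (kR - (B ^ (m - n)).mulVec kR) = eNorm ((B ^ (m - n)).mulVec kR - kR) := by
      rw [← eNorm_neg' ((B ^ (m - n)).mulVec kR - kR), neg_sub]
    have h3 : σ ^ (m - n) * eNorm kR - eNorm kR ≤ eNorm ((B ^ (m - n)).mulVec kR - kR) := by
      have h4 := hBn (m - n) kR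
      have h5 := eNorm_sub_le' ((B ^ (m - n)).mulVec kR) kR
      linarith
    have e5 : σ ^ n * (σ ^ (m - n) * eNorm kR - eNorm kR)
        ≤ eNorm ((B ^ n).mulVec (kR - (B ^ (m - n)).mulVec kR)) := by
      calc σ ^ n * (σ ^ (m - n) * eNorm kR - eNorm kR)
          ≤ σ ^ n * eNorm (kR - (B ^ (m - n)).mulVec kR) := by
            apply mul_le_mul_of_nonneg_left _ (pow_nonneg hσ0.le n)
            rw [h2]; exact h3
        _ ≤ _ := h1
    have hmn : n + (m - n) = m := by omega
    have e6 : σ ^ n * (σ ^ (m - n) * eNorm kR - eNorm kR) = (σ ^ m - σ ^ n) * eNorm kR := by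
      calc σ ^ n * (σ ^ (m - n) * eNorm kR - eNorm kR)
          = (σ ^ n * σ ^ (m - n)) * eNorm kR - σ ^ n * eNorm kR := by ring
        _ = (σ ^ m - σ ^ n) * eNorm kR := by rw [← pow_add, hmn]; ring
    have e7 : c₀ * σ ^ m ≤ (σ ^ m - σ ^ n) * eNorm kR := by
      have hp : σ ^ (n + 1) ≤ σ ^ m := pow_le_pow_right₀ hσ.le (by omega)
      have key2 : σ ^ n ≤ σ ^ m / σ := by
        rw [le_div_iff₀ hσ0, ← pow_succ]; exact hp
      have hcc : c₀ * σ ^ m = (σ ^ m - σ ^ m / σ) * eNorm kR := by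
        rw [hc₀def]; field_simp
      rw [hcc]
      apply mul_le_mul_of_nonneg_right _ (eNorm_nonneg' kR)
      linarith
    linarith
  -- decay constants
  set r : ℝ := σ ^ (-α) with hrdef
  have hr0 : 0 < r := Real.rpow_pos_of_pos hσ0 _
  have hr1 : r < 1 := Real.rpow_lt_one_of_one_lt_of_neg hσ (by linarith)
  set C' : ℝ := C * c₀ ^ (-α) with hC'def
  have hC' : 0 < C' := mul_pos hC (Real.rpow_pos_of_pos hc₀ _)
  -- decay of Fourier transform along separated vectors
  have hft : ∀ (u : Fin d → ℝ), u ≠ 0 → ∀ m : ℕ, c₀ * σ ^ m ≤ eNorm u →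
      ‖ftRd μ u‖ ≤ C' * r ^ m := by
    intro u hu m hsepu
    have hcσ : 0 < c₀ * σ ^ m := by positivity
    have hdec := hdecay u hu
    refine le_trans hdec ?_
    have h1 : eNorm u ^ (-α) ≤ (c₀ * σ ^ m) ^ (-α) := by
      rw [Real.rpow_neg hcσ.le, Real.rpow_neg (le_trans hcσ.le hsepu)]
      apply inv_anti₀ (Real.rpow_pos_of_pos hcσ α)
      exact Real.rpow_le_rpow hcσ.le hsepu hα.le
    have h2 : (c₀ * σ ^ m) ^ (-α) = c₀ ^ (-α) * r ^ m := by
      rw [Real.mul_rpow hc₀.le (by positivity)]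
      congr 1
      rw [← Real.rpow_natCast σ m, ← Real.rpow_mul hσ0.le,
        hrdef, ← Real.rpow_natCast (σ ^ (-α)) m, ← Real.rpow_mul hσ0.le]
      ring_nf
    calc C * eNorm u ^ (-α) ≤ C * (c₀ * σ ^ m) ^ (-α) :=
          mul_le_mul_of_nonneg_left h1 hC.le
      _ = C' * r ^ m := by rw [h2, hC'def]; ring
  -- bound for each pair
  set ψ : ℕ → ℕ → ℝ := fun n m => (if n = m then 1 else 0) + C' * r ^ n + C' * r ^ m
    with hψdef
  have hψ : ∀ n m : ℕ, ‖∫ x, eChar (w n - w m) x ∂μ‖ ≤ ψ n m := by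
    have main : ∀ n m : ℕ, n ≠ m → ‖∫ x, eChar (w n - w m) x ∂μ‖ ≤ C' * r ^ max n m := by
      intro n m hnm
      rcases hnm.lt_or_gt with h | h
      · have hs := hsep n m h
        have hne : w m - w n ≠ 0 := by
          intro hz
          have hz2 : eNorm (w n - w m) = 0 := by
            rw [← eNorm_neg' (w n - w m), neg_sub, hz]
            simp [eNorm]
          have := lt_of_lt_of_le (by positivity : (0:ℝ) < c₀ * σ ^ m) hs
          simp_all
        have heq : eNorm (w m - w n) = eNorm (w n - w m) := by
          rw [← eNorm_neg' (w m - w n), neg_sub]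
        rw [integral_eChar, neg_sub, max_eq_right h.le]
        exact hft _ hne m (heq ▸ hs)
      · have hs := hsep m n h
        have hne : w m - w n ≠ 0 := by
          intro hz
          have := lt_of_lt_of_le (by positivity : (0:ℝ) < c₀ * σ ^ n) hs
          rw [hz] at this
          simp [eNorm] at this
        rw [integral_eChar, neg_sub, max_eq_left h.le]
        exact hft _ hne n hs
    intro n m
    rcases eq_or_ne n m with h | h
    · subst h
      have hone := norm_integral_eChar_le_one μ (w n - w n)
      have h1 : (0:ℝ) ≤ C' * r ^ n := by positivity
      rw [hψdef]
      have : (if n = n then (1:ℝ) else 0) = 1 := if_pos rfl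
      dsimp only
      rw [this]
      linarith
    · have hmain := main n m h
      have hrmax : C' * r ^ max n m ≤ C' * r ^ n + C' * r ^ m := by
        have h1 : (0:ℝ) ≤ C' * r ^ n := by positivity
        have h2 : (0:ℝ) ≤ C' * r ^ m := by positivity
        rcases max_choice n m with hmx | hmx <;> rw [hmx] <;> linarith
      rw [hψdef]
      have : (if n = m then (1:ℝ) else 0) = 0 := if_neg h
      dsimp only
      rw [this]
      linarith
  -- geometric series bound
  set T : ℝ := ∑' n : ℕ, r ^ n with hTdef
  have hTsum : Summable (fun n : ℕ => r ^ n) := summable_geometric_of_lt_one hr0.le hr1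
  have hT0 : 0 ≤ T := tsum_nonneg fun n => by positivity
  have hgeo : ∀ N : ℕ, ∑ n ∈ Finset.Icc 1 N, r ^ n ≤ T :=
    fun N => Summable.sum_le_tsum _ (fun i _ => by positivity) hTsum
  set K : ℝ := 1 + 2 * C' * T with hKdef
  have hK0 : 0 ≤ K := by positivity
  -- sum of ψ over the square
  have hψsum : ∀ N : ℕ, ∑ n ∈ Finset.Icc 1 N, ∑ m ∈ Finset.Icc 1 N, ψ n m ≤ N * K := by
    intro N
    have hcard : (Finset.Icc 1 N).card = N := by
      rw [Nat.card_Icc]; omega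
    have h1 : ∑ n ∈ Finset.Icc 1 N, ∑ m ∈ Finset.Icc 1 N, (if n = m then (1:ℝ) else 0)
        ≤ (N : ℝ) := by
      have : ∀ n ∈ Finset.Icc 1 N,
          ∑ m ∈ Finset.Icc 1 N, (if n = m then (1:ℝ) else 0) ≤ 1 := by
        intro n hn
        rw [Finset.sum_ite_eq]
        split <;> norm_num
      calc ∑ n ∈ Finset.Icc 1 N, ∑ m ∈ Finset.Icc 1 N, (if n = m then (1:ℝ) else 0)
          ≤ ∑ _n ∈ Finset.Icc 1 N, (1:ℝ) := Finset.sum_le_sum this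
        _ = (N : ℝ) := by rw [Finset.sum_const, hcard]; simp
    have h2 : ∑ n ∈ Finset.Icc 1 N, ∑ m ∈ Finset.Icc 1 N, C' * r ^ n ≤ (N : ℝ) * (C' * T) := by
      calc ∑ n ∈ Finset.Icc 1 N, ∑ m ∈ Finset.Icc 1 N, C' * r ^ n
          = ∑ n ∈ Finset.Icc 1 N, (N : ℝ) * (C' * r ^ n) := by
            apply Finset.sum_congr rfl
            intro n _
            rw [Finset.sum_const, hcard]
            simp [mul_comm]
        _ = (N : ℝ) * (C' * ∑ n ∈ Finset.Icc 1 N, r ^ n) := by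
            rw [← Finset.mul_sum, ← Finset.mul_sum]
        _ ≤ (N : ℝ) * (C' * T) := by
            apply mul_le_mul_of_nonneg_left _ (Nat.cast_nonneg N)
            exact mul_le_mul_of_nonneg_left (hgeo N) hC'.le
    have h3 : ∑ n ∈ Finset.Icc 1 N, ∑ m ∈ Finset.Icc 1 N, C' * r ^ m ≤ (N : ℝ) * (C' * T) := by
      calc ∑ n ∈ Finset.Icc 1 N, ∑ m ∈ Finset.Icc 1 N, C' * r ^ m
          = ∑ _n ∈ Finset.Icc 1 N, (C' * ∑ m ∈ Finset.Icc 1 N, r ^ m) := by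
            apply Finset.sum_congr rfl
            intro n _
            rw [← Finset.mul_sum]
        _ ≤ ∑ _n ∈ Finset.Icc 1 N, (C' * T) :=
            Finset.sum_le_sum fun n _ => mul_le_mul_of_nonneg_left (hgeo N) hC'.le
        _ = (N : ℝ) * (C' * T) := by rw [Finset.sum_const, hcard]; simp
    have hsplit : ∑ n ∈ Finset.Icc 1 N, ∑ m ∈ Finset.Icc 1 N, ψ n m
        = (∑ n ∈ Finset.Icc 1 N, ∑ m ∈ Finset.Icc 1 N, (if n = m then (1:ℝ) else 0))
          + (∑ n ∈ Finset.Icc 1 N, ∑ m ∈ Finset.Icc 1 N, C' * r ^ n)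
          + (∑ n ∈ Finset.Icc 1 N, ∑ m ∈ Finset.Icc 1 N, C' * r ^ m) := by
      rw [← Finset.sum_add_distrib, ← Finset.sum_add_distrib]
      apply Finset.sum_congr rfl
      intro n _
      rw [← Finset.sum_add_distrib, ← Finset.sum_add_distrib]
    rw [hsplit, hKdef]
    have : (N:ℝ) * (1 + 2 * C' * T) = (N:ℝ) + ((N:ℝ) * (C' * T) + (N:ℝ) * (C' * T)) := by ring
    rw [this]
    linarith
  -- per-N integral bound
  have hNbound : ∀ N : ℕ, 1 ≤ N → ∫ x, ‖weylSum A k N x‖ ^ 2 ∂μ ≤ K / N := by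
    intro N hN
    have hNpos : (0:ℝ) < N := by exact_mod_cast hN
    have hb := integral_sq_bound μ w N hN (weylSum A k N)
      (fun x => by rw [weylSum_eq]) ψ hψ
    refine le_trans hb ?_
    rw [div_le_div_iff₀ (by positivity) hNpos]
    calc (∑ n ∈ Finset.Icc 1 N, ∑ m ∈ Finset.Icc 1 N, ψ n m) * (N:ℝ)
        ≤ ((N:ℝ) * K) * (N:ℝ) := by
          apply mul_le_mul_of_nonneg_right (hψsum N) hNpos.le
      _ = K * (N:ℝ) ^ 2 := by ring
  -- summability
  have hnonneg : ∀ N : ℕ, 0 ≤ (1 / (N + 1 : ℝ)) * ∫ x, ‖weylSum A k (N + 1) x‖ ^ 2 ∂μ := by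
    intro N
    apply mul_nonneg (by positivity)
    exact integral_nonneg fun x => by positivity
  have hle : ∀ N : ℕ, (1 / (N + 1 : ℝ)) * ∫ x, ‖weylSum A k (N + 1) x‖ ^ 2 ∂μ
      ≤ K / ((N : ℝ) + 1) ^ 2 := by
    intro N
    have hN1 : (0:ℝ) < (N:ℝ) + 1 := by positivity
    have hb := hNbound (N + 1) (by omega)
    have hcast : ((N + 1 : ℕ) : ℝ) = (N : ℝ) + 1 := by push_cast; ring
    rw [hcast] at hb
    calc (1 / ((N:ℝ) + 1)) * ∫ x, ‖weylSum A k (N + 1) x‖ ^ 2 ∂μ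
        ≤ (1 / ((N:ℝ) + 1)) * (K / ((N:ℝ) + 1)) := by
          apply mul_le_mul_of_nonneg_left hb (by positivity)
      _ = K / ((N : ℝ) + 1) ^ 2 := by
          rw [div_mul_div_comm, one_mul, ← sq]
  have hsummable : Summable (fun N : ℕ => K / ((N : ℝ) + 1) ^ 2) := by
    have h1 : Summable (fun n : ℕ => 1 / (n : ℝ) ^ 2) :=
      Real.summable_one_div_nat_pow.2 (by norm_num)
    have h2 : Summable (fun n : ℕ => 1 / ((n + 1 : ℕ) : ℝ) ^ 2) :=
      (summable_nat_add_iff (f := fun n : ℕ => 1 / (n : ℝ) ^ 2) 1).2 h1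
    have h3 : Summable (fun n : ℕ => 1 / ((n : ℝ) + 1) ^ 2) := by
      apply h2.congr
      intro n
      push_cast
      ring
    simpa [div_eq_mul_inv] using h3.mul_left K
  exact Summable.of_nonneg_of_le hnonneg hle hsummable
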